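/- arXiv:2204.02740 — 2 statements merged into one kernel-verified Lean document; each statement's English description precedes it below -/
import Mathlib

section
/- Let N ≥ 2, θ_l = 2πl/N, p_k = r₀ e^{iθ_k} for k = 1,…,N with r₀ > 0, and f : ℝ → ℝ. Then for each k, Σ_{j≠k, 1≤j≤N} (p_k - p_j) f(|p_k - p_j|) = r₀ F(r₀) e^{iθ_k}, where F(r₀) = Σ_{l=1}^{N-1} (1 - e^{iθ_l}) f(2r₀|sin(θ_l/2)|). -/
open Complex Finset

lemma abs_one_sub_exp_aux (t : ℝ) :
    ‖1 - Complex.exp ((t : ℂ) * Complex.I)‖ = 2 * |Real.sin (t / 2)| := by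
  have hc : Real.cos t = 1 - 2 * Real.sin (t / 2) ^ 2 := by
    have h2 := Real.cos_two_mul' (t / 2)
    rw [show 2 * (t / 2) = t by ring] at h2
    nlinarith [Real.sin_sq_add_cos_sq (t / 2)]
  rw [Complex.exp_mul_I, Complex.norm_def, Complex.normSq_apply]
  simp only [Complex.sub_re, Complex.one_re, Complex.add_re, Complex.sub_im, Complex.one_im,
    Complex.add_im, Complex.mul_re, Complex.mul_im, Complex.I_re, Complex.I_im,
    Complex.cos_ofReal_re, Complex.cos_ofReal_im, Complex.sin_ofReal_re, Complex.sin_ofReal_im]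
  have key : (1 - (Real.cos t + (Real.sin t * 0 - 0 * 1))) *
        (1 - (Real.cos t + (Real.sin t * 0 - 0 * 1))) +
      (0 - (0 + (Real.sin t * 1 + 0 * 0))) * (0 - (0 + (Real.sin t * 1 + 0 * 0)))
      = (2 * |Real.sin (t / 2)|) ^ 2 := by
    have := _root_.sq_abs (Real.sin (t / 2))
    nlinarith [Real.sin_sq_add_cos_sq t]
  rw [key, Real.sqrt_sq (by positivity)]

theorem stmt6 (N : ℕ) (hN : 2 ≤ N) (r₀ : ℝ) (hr : 0 < r₀) (f : ℝ → ℝ)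
    (θ : ℕ → ℝ) (hθ : ∀ l : ℕ, θ l = 2 * Real.pi * l / N)
    (p : ℕ → ℂ) (hp : ∀ k : ℕ, p k = (r₀ : ℂ) * Complex.exp ((θ k : ℂ) * Complex.I))
    (F : ℂ) (hF : F = ∑ l ∈ Finset.Icc 1 (N - 1),
      (1 - Complex.exp ((θ l : ℂ) * Complex.I)) * (f (2 * r₀ * |Real.sin (θ l / 2)|) : ℂ))
    (k : ℕ) (hk : k ∈ Finset.Icc 1 N) :
    ∑ j ∈ (Finset.Icc 1 N).erase k,
        (p k - p j) * (f ‖p k - p j‖ : ℂ) =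
      (r₀ : ℂ) * F * Complex.exp ((θ k : ℂ) * Complex.I) := by
  simp only [Finset.mem_Icc] at hk
  have hNpos : 0 < N := by omega
  -- exp(θ a * I) depends only on a mod N
  have hexp : ∀ a b : ℕ, a % N = b % N →
      Complex.exp ((θ a : ℂ) * Complex.I) = Complex.exp ((θ b : ℂ) * Complex.I) := by
    intro a b hab
    obtain ⟨m, hm⟩ := (Nat.modEq_iff_dvd (n := N) (a := a) (b := b)).mp hab
    have hR : (b : ℝ) - a = N * m := by exact_mod_cast hm
    have h1 : θ a = θ b + 2 * Real.pi * (-m) := by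
      rw [hθ a, hθ b]
      have hN0 : (N : ℝ) ≠ 0 := by positivity
      field_simp
      nlinarith [hR, Real.pi_pos]
    rw [h1]
    push_cast
    rw [add_mul, Complex.exp_add,
      show (2 * (Real.pi : ℂ) * (-(m : ℂ))) * Complex.I = (-m : ℤ) * (2 * (Real.pi : ℂ) * Complex.I)
        by push_cast; ring,
      Complex.exp_int_mul_two_pi_mul_I, mul_one]
  -- value of the forward map
  have hi_val : ∀ j, 1 ≤ j → j ≤ N → j ≠ k →
      (j + N - k) % N = if k < j then j - k else j + N - k := by
    intro j h1 h2 h3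
    split_ifs with h
    · rw [show j + N - k = (j - k) + N by omega, Nat.add_mod_right,
        Nat.mod_eq_of_lt (by omega)]
    · exact Nat.mod_eq_of_lt (by omega)
  have he_val : ∀ l, 1 ≤ l → l ≤ N - 1 →
      (k + l - 1) % N + 1 = if k + l ≤ N then k + l else k + l - N := by
    intro l h1 h2
    split_ifs with h
    · rw [Nat.mod_eq_of_lt (by omega)]; omega
    · rw [show k + l - 1 = (k + l - 1 - N) + N by omega, Nat.add_mod_right,
        Nat.mod_eq_of_lt (by omega)]
      omega
  rw [hF, Finset.mul_sum, Finset.sum_mul]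
  refine Finset.sum_nbij' (i := fun j => (j + N - k) % N)
    (j := fun l => (k + l - 1) % N + 1) ?_ ?_ ?_ ?_ ?_
  · intro j hj
    simp only [Finset.mem_erase, Finset.mem_Icc] at hj
    rw [Finset.mem_Icc, hi_val j hj.2.1 hj.2.2 hj.1]
    split_ifs <;> omega
  · intro l hl
    simp only [Finset.mem_Icc] at hl
    rw [Finset.mem_erase, Finset.mem_Icc, he_val l hl.1 hl.2]
    split_ifs <;> omega
  · intro j hj
    simp only [Finset.mem_erase, Finset.mem_Icc] at hj
    have h1 : 1 ≤ (j + N - k) % N ∧ (j + N - k) % N ≤ N - 1 := by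
      rw [hi_val j hj.2.1 hj.2.2 hj.1]; split_ifs <;> omega
    rw [he_val _ h1.1 h1.2, hi_val j hj.2.1 hj.2.2 hj.1]
    split_ifs <;> omega
  · intro l hl
    simp only [Finset.mem_Icc] at hl
    have h1 : 1 ≤ (k + l - 1) % N + 1 ∧ (k + l - 1) % N + 1 ≤ N ∧ (k + l - 1) % N + 1 ≠ k := by
      rw [he_val l hl.1 hl.2]; split_ifs <;> omega
    rw [hi_val _ h1.1 h1.2.1 h1.2.2, he_val l hl.1 hl.2]
    split_ifs <;> omega
  · intro j hj
    simp only [Finset.mem_erase, Finset.mem_Icc] at hj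
    set l := (j + N - k) % N with hl
    have hlb : 1 ≤ l ∧ l ≤ N - 1 := by
      rw [hl, hi_val j hj.2.1 hj.2.2 hj.1]; split_ifs <;> omega
    -- j ≡ k + l (mod N)
    have hjkl : j % N = (k + l) % N := by
      rw [hl, hi_val j hj.2.1 hj.2.2 hj.1]
      split_ifs with h
      · congr 1; omega
      · rw [show k + (j + N - k) = j + N by omega, Nat.add_mod_right]
    have hθadd : θ (k + l) = θ k + θ l := by
      rw [hθ, hθ, hθ]; push_cast; ring
    have hej : Complex.exp ((θ j : ℂ) * Complex.I)
        = Complex.exp ((θ k : ℂ) * Complex.I) * Complex.exp ((θ l : ℂ) * Complex.I) := by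
      rw [hexp j (k + l) hjkl, hθadd, ← Complex.exp_add]
      push_cast; ring_nf
    have hdiff : p k - p j = (r₀ : ℂ) * Complex.exp ((θ k : ℂ) * Complex.I)
        * (1 - Complex.exp ((θ l : ℂ) * Complex.I)) := by
      rw [hp, hp, hej]; ring
    have habs : ‖p k - p j‖ = 2 * r₀ * |Real.sin (θ l / 2)| := by
      rw [hdiff, norm_mul, norm_mul, Complex.norm_real, Real.norm_eq_abs, abs_of_pos hr,
        Complex.norm_exp_ofReal_mul_I, abs_one_sub_exp_aux]
      ring
    rw [habs, hdiff]
    ring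
end

section
/- Let N ≥ 2, r₀ > 0, f : ℝ → ℝ with F(r₀) = Σ_{l=1}^{N-1}(1 - e^{2πil/N}) f(2r₀|sin(πl/N)|) = 0, and let M₁, M₂ > 0 with M₁ = M₂|v₀|² for some v₀ ∈ ℂ. Then p_k(t) = v₀ t + r₀ e^{2πik/N}, q_k(t) = v₀ (constant) solve the system ṗ_k = q_k - Σ_{j≠k}(p_k - p_j) f(|p_k - p_j|), q̇_k = M₁ q_k - M₂ q_k |q_k|² - k₃ Σ_{j≠k}(p_k - p_j) f(|p_k - p_j|), for any k₃ ∈ ℝ. -/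
lemma abs_one_sub_exp (x : ℝ) :
    ‖1 - Complex.exp ((x : ℂ) * Complex.I)‖ = 2 * |Real.sin (x / 2)| := by
  rw [Complex.exp_mul_I]
  have h1 : (1 : ℂ) - (Complex.cos x + Complex.sin x * Complex.I)
      = Complex.mk (1 - Real.cos x) (-Real.sin x) := by
    apply Complex.ext <;> simp [Complex.cos_ofReal_re, Complex.sin_ofReal_re]
  rw [h1, Complex.norm_def, Complex.normSq_mk]
  have h2 : (1 - Real.cos x) * (1 - Real.cos x) + -Real.sin x * -Real.sin x
      = (2 * |Real.sin (x / 2)|) ^ 2 := by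
    have hc : Real.cos x = 2 * Real.cos (x / 2) ^ 2 - 1 := by
      have := Real.cos_two_mul (x / 2)
      rwa [show 2 * (x / 2) = x by ring] at this
    have hpy := Real.sin_sq_add_cos_sq x
    have hpy2 := Real.sin_sq_add_cos_sq (x / 2)
    rw [mul_pow, sq_abs]
    nlinarith [hc, hpy, hpy2]
  rw [h2, Real.sqrt_sq (by positivity)]

lemma ring_sum_zero (N k : ℕ) (hk1 : 1 ≤ k) (hk2 : k ≤ N)
    (r₀ : ℝ) (hr : 0 ≤ r₀) (f : ℝ → ℝ)
    (hF : ∑ l ∈ Finset.Icc 1 (N - 1),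
      (1 - Complex.exp ((2 * Real.pi * l / N : ℝ) * Complex.I)) *
        (f (2 * r₀ * |Real.sin (Real.pi * l / N)|) : ℂ) = 0) :
    ∑ j ∈ (Finset.Icc 1 N).erase k,
      ((r₀ : ℂ) * Complex.exp ((2 * Real.pi * k / N : ℝ) * Complex.I)
        - (r₀ : ℂ) * Complex.exp ((2 * Real.pi * j / N : ℝ) * Complex.I)) *
        (f (‖(r₀ : ℂ) * Complex.exp ((2 * Real.pi * k / N : ℝ) * Complex.I)
          - (r₀ : ℂ) * Complex.exp ((2 * Real.pi * j / N : ℝ) * Complex.I)‖) : ℂ) = 0 := by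
  set E : ℕ → ℂ := fun m => Complex.exp ((2 * Real.pi * m / N : ℝ) * Complex.I) with hE
  have key : ∑ j ∈ (Finset.Icc 1 N).erase k,
      ((r₀ : ℂ) * E k - (r₀ : ℂ) * E j) *
        (f (‖(r₀ : ℂ) * E k - (r₀ : ℂ) * E j‖) : ℂ)
      = ∑ l ∈ Finset.Icc 1 (N - 1), (r₀ : ℂ) * E k *
          ((1 - E l) * (f (2 * r₀ * |Real.sin (Real.pi * l / N)|) : ℂ)) := by
    refine Finset.sum_nbij' (fun j => if k < j then j - k else j + N - k)
      (fun l => if k + l ≤ N then k + l else k + l - N) ?_ ?_ ?_ ?_ ?_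
    · intro j hj
      simp only [Finset.mem_erase, Finset.mem_Icc] at hj ⊢
      split_ifs <;> omega
    · intro l hl
      simp only [Finset.mem_erase, Finset.mem_Icc] at hl ⊢
      split_ifs <;> omega
    · intro j hj
      simp only [Finset.mem_erase, Finset.mem_Icc] at hj
      split_ifs <;> omega
    · intro l hl
      simp only [Finset.mem_Icc] at hl
      split_ifs <;> omega
    · intro j hj
      simp only [Finset.mem_erase, Finset.mem_Icc] at hj
      set l := if k < j then j - k else j + N - k with hl
      have hlN : 1 ≤ l ∧ l ≤ N - 1 := by split_ifs at hl <;> omega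
      have hcase : j = k + l ∨ j + N = k + l := by split_ifs at hl <;> omega
      have hN0 : (N : ℂ) ≠ 0 := Nat.cast_ne_zero.mpr (by omega)
      have hEj : E j = E k * E l := by
        rw [hE]
        simp only
        rw [← Complex.exp_add]
        rcases hcase with hc | hc
        · congr 1
          push_cast [hc]
          field_simp
        · have hj' : (j : ℂ) = (k : ℂ) + l - N := by
            have h2 : ((j : ℂ)) + N = k + l := by exact_mod_cast hc
            linear_combination h2
          have harg : ((2 * Real.pi * j / N : ℝ) : ℂ) * Complex.I
              = ((2 * Real.pi * k / N : ℝ) : ℂ) * Complex.I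
                + ((2 * Real.pi * l / N : ℝ) : ℂ) * Complex.I
                - 2 * Real.pi * Complex.I := by
            push_cast
            rw [hj']
            field_simp
          rw [harg, Complex.exp_sub, Complex.exp_add, Complex.exp_two_pi_mul_I, div_one]
      have habsEl : ‖1 - E l‖ = 2 * |Real.sin (Real.pi * l / N)| := by
        rw [hE]
        simp only
        rw [abs_one_sub_exp, show 2 * Real.pi * (l : ℝ) / N / 2 = Real.pi * l / N by ring]
      have habsj : ‖(r₀ : ℂ) * E k - (r₀ : ℂ) * E j‖
          = 2 * r₀ * |Real.sin (Real.pi * l / N)| := by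
        have hfac : (r₀ : ℂ) * E k - (r₀ : ℂ) * E j = (r₀ : ℂ) * E k * (1 - E l) := by
          rw [hEj]; ring
        rw [hfac, norm_mul, norm_mul, habsEl, Complex.norm_real, hE]
        simp only
        rw [Complex.norm_exp_ofReal_mul_I, Real.norm_eq_abs, abs_of_nonneg hr]
        ring
      rw [habsj, hEj]
      ring
  calc _ = _ := key
  _ = (r₀ : ℂ) * E k * ∑ l ∈ Finset.Icc 1 (N - 1),
        ((1 - E l) * (f (2 * r₀ * |Real.sin (Real.pi * l / N)|) : ℂ)) := by
      rw [Finset.mul_sum]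
  _ = 0 := by rw [hF, mul_zero]

theorem stmt14 (N : ℕ) (hN : 2 ≤ N) (r₀ : ℝ) (hr : 0 < r₀) (f : ℝ → ℝ)
    (M₁ M₂ k₃ : ℝ) (hM₁ : 0 < M₁) (hM₂ : 0 < M₂) (v₀ : ℂ)
    (hv : M₁ = M₂ * ‖v₀‖ ^ 2)
    (hF : ∑ l ∈ Finset.Icc 1 (N - 1),
      (1 - Complex.exp ((2 * Real.pi * l / N : ℝ) * Complex.I)) *
        (f (2 * r₀ * |Real.sin (Real.pi * l / N)|) : ℂ) = 0)
    (p : ℕ → ℝ → ℂ)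
    (hp : ∀ k t, p k t = v₀ * t + (r₀ : ℂ) * Complex.exp ((2 * Real.pi * k / N : ℝ) * Complex.I))
    (q : ℕ → ℝ → ℂ) (hq : ∀ k t, q k t = v₀)
    (k : ℕ) (hk : k ∈ Finset.Icc 1 N) (t : ℝ) :
    deriv (p k) t = q k t -
        ∑ j ∈ (Finset.Icc 1 N).erase k,
          (p k t - p j t) * (f (‖p k t - p j t‖) : ℂ) ∧
      deriv (q k) t = (M₁ : ℂ) * q k t - (M₂ : ℂ) * q k t * (‖q k t‖ ^ 2 : ℝ) -
        (k₃ : ℂ) * ∑ j ∈ (Finset.Icc 1 N).erase k,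
          (p k t - p j t) * (f (‖p k t - p j t‖) : ℂ) := by
  have hk' := Finset.mem_Icc.mp hk
  have hpd : ∀ j, p k t - p j t
      = (r₀ : ℂ) * Complex.exp ((2 * Real.pi * k / N : ℝ) * Complex.I)
        - (r₀ : ℂ) * Complex.exp ((2 * Real.pi * j / N : ℝ) * Complex.I) := by
    intro j; rw [hp, hp]; ring
  have hsum : ∑ j ∈ (Finset.Icc 1 N).erase k,
      (p k t - p j t) * (f (‖p k t - p j t‖) : ℂ) = 0 := by
    rw [← ring_sum_zero N k hk'.1 hk'.2 r₀ hr.le f hF]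
    exact Finset.sum_congr rfl fun j _ => by rw [hpd j]
  constructor
  · have hpk : p k = fun s : ℝ => v₀ * (s : ℂ)
        + (r₀ : ℂ) * Complex.exp ((2 * Real.pi * k / N : ℝ) * Complex.I) := funext (hp k)
    have h1 : HasDerivAt (fun s : ℝ => (s : ℂ)) 1 t := by
      simpa using (hasDerivAt_id t).ofReal_comp
    have h2 : HasDerivAt (fun s : ℝ => v₀ * (s : ℂ)
        + (r₀ : ℂ) * Complex.exp ((2 * Real.pi * k / N : ℝ) * Complex.I)) v₀ t := by
      simpa using (h1.const_mul v₀).add_const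
        ((r₀ : ℂ) * Complex.exp ((2 * Real.pi * k / N : ℝ) * Complex.I))
    have hderiv : deriv (p k) t = v₀ := by rw [hpk]; exact h2.deriv
    rw [hderiv, hq, hsum, sub_zero]
  · have hqk : q k = fun _ : ℝ => v₀ := funext (hq k)
    have hderivq : deriv (q k) t = 0 := by rw [hqk]; exact deriv_const t v₀
    rw [hderivq, hq, hsum, mul_zero, sub_zero]
    have hvC : (M₁ : ℂ) = (M₂ : ℂ) * ((‖v₀‖ ^ 2 : ℝ) : ℂ) := by
      exact_mod_cast congrArg Complex.ofReal hv
    linear_combination (-v₀) * hvC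
end
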